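/- Let G be a finitely generated nilpotent group, M a submonoid, and Z a central subgroup of G generated by finitely many elements z₁, ..., zₙ each of which is a commutator [x,y] with x ∈ G, y ∈ G. If MZ is a finite-index subgroup of G, then M is a finite-index subgroup of G. -/

import Mathlib

open scoped Pointwise

section Key
variable {G : Type*} [Group G] {u v c : G}

lemma k1 (hc : ∀ g : G, Commute c g) (hconj : v⁻¹ * u * v = u * c) :
    ∀ b : ℤ, v ^ (-b) * u * v ^ b = u * c ^ b := by
  have hcg : ∀ (j : ℤ) (g : G), c ^ j * g = g * c ^ j := fun j g => ((hc g).zpow_left j).eq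
  have hmid : ∀ (b : ℤ), v⁻¹ * c ^ b * v = c ^ b := by
    intro b
    rw [mul_assoc, hcg b v]
    group
  have hmid' : ∀ (b : ℤ), v * c ^ b * v⁻¹ = c ^ b := by
    intro b
    rw [mul_assoc, hcg b v⁻¹]
    group
  have hconj' : v * u * v⁻¹ = u * c⁻¹ := by
    have h3 : v * (u * c) * v⁻¹ = u := by rw [← hconj]; group
    calc v * u * v⁻¹ = (v * (u * c) * v⁻¹) * (v * c⁻¹ * v⁻¹) := by group
    _ = u * (v * c⁻¹ * v⁻¹) := by rw [h3]
    _ = u * c⁻¹ := by rw [show (c⁻¹ : G) = c ^ (-1 : ℤ) by group, hmid']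
  intro b
  induction b using Int.induction_on with
  | zero => simp
  | succ b ih =>
      calc v ^ (-((b:ℤ)+1)) * u * v ^ ((b:ℤ)+1)
          = v⁻¹ * (v ^ (-(b:ℤ)) * u * v ^ (b:ℤ)) * v := by group
      _ = v⁻¹ * (u * c ^ (b:ℤ)) * v := by rw [ih]
      _ = (v⁻¹ * u * v) * (v⁻¹ * c ^ (b:ℤ) * v) := by group
      _ = (u * c) * c ^ (b:ℤ) := by rw [hconj, hmid]
      _ = u * c ^ ((b:ℤ)+1) := by rw [zpow_add_one]; group
  | pred b ih =>
      calc v ^ (-(-(b:ℤ)-1)) * u * v ^ (-(b:ℤ)-1)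
          = v * (v ^ (-(-(b:ℤ))) * u * v ^ (-(b:ℤ))) * v⁻¹ := by group
      _ = v * (u * c ^ (-(b:ℤ))) * v⁻¹ := by rw [ih]
      _ = (v * u * v⁻¹) * (v * c ^ (-(b:ℤ)) * v⁻¹) := by group
      _ = (u * c⁻¹) * c ^ (-(b:ℤ)) := by rw [hconj', hmid']
      _ = u * c ^ (-(b:ℤ)-1) := by rw [zpow_sub_one]; group

lemma k2 (hc : ∀ g : G, Commute c g) (hconj : v⁻¹ * u * v = u * c) (a b : ℤ) :
    u ^ a * v ^ b = v ^ b * u ^ a * c ^ (a * b) := by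
  have h1 : v ^ (-b) * u ^ a * (v ^ (-b))⁻¹ = (u * c ^ b) ^ a := by
    rw [← conj_zpow, show (v ^ (-b))⁻¹ = v ^ b by group, k1 hc hconj b]
  have h2 : (u * c ^ b) ^ a = u ^ a * c ^ (a * b) := by
    rw [((hc u).symm.zpow_right b).mul_zpow a, ← zpow_mul, mul_comm b a]
  have h3 : v ^ (-b) * u ^ a * v ^ b = u ^ a * c ^ (a * b) := by
    rw [show v ^ (b:ℤ) = (v ^ (-b))⁻¹ by group, h1, h2]
  calc u ^ a * v ^ b = v ^ b * (v ^ (-b) * u ^ a * v ^ b) := by group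
  _ = v ^ b * (u ^ a * c ^ (a*b)) := by rw [h3]
  _ = v ^ b * u ^ a * c ^ (a*b) := by group

lemma k3 (hc : ∀ g : G, Commute c g) (hconj : v⁻¹ * u * v = u * c) (a b : ℤ) :
    u ^ a * v ^ b * u ^ (-a) * v ^ (-b) = c ^ (a * b) := by
  have hcg : ∀ (j : ℤ) (g : G), c ^ j * g = g * c ^ j := fun j g => ((hc g).zpow_left j).eq
  calc u ^ a * v ^ b * u ^ (-a) * v ^ (-b)
      = (u ^ a * v ^ b) * (u ^ (-a) * v ^ (-b)) := by group
  _ = (v ^ b * u ^ a * c ^ (a*b)) * (u ^ (-a) * v ^ (-b)) := by rw [k2 hc hconj a b]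
  _ = (v ^ b * u ^ a * (u ^ (-a) * v ^ (-b))) * c ^ (a*b) := by
        rw [mul_assoc (v ^ b * u ^ a), hcg (a*b), ← mul_assoc]
  _ = c ^ (a*b) := by group

end Key

open scoped Pointwise

set_option maxHeartbeats 1000000 in
lemma step_lemma {G : Type*} [Group G] (M : Submonoid G) (x y : G)
    (hc : ∀ g : G, Commute (x⁻¹ * y⁻¹ * x * y) g)
    (H : Subgroup G)
    (hH : (H : Set G) = (M : Set G) * (Subgroup.zpowers (x⁻¹ * y⁻¹ * x * y) : Set G))
    (hfi : H.FiniteIndex) :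
    ∃ K : Subgroup G, (K : Set G) = (M : Set G) ∧ K.FiniteIndex := by
  set c := x⁻¹ * y⁻¹ * x * y with hcdef
  have hconj : y⁻¹ * x * y = x * c := by rw [hcdef]; group
  have hcg : ∀ (j : ℤ) (g : G), c ^ j * g = g * c ^ j := fun j g => ((hc g).zpow_left j).eq
  -- membership facts
  have hmemH : ∀ {h : G}, h ∈ H → ∃ m, m ∈ M ∧ ∃ j : ℤ, h = m * c ^ j := by
    intro h hh
    have : h ∈ (M : Set G) * (Subgroup.zpowers c : Set G) := by rw [← hH]; exact hh
    obtain ⟨m, hm, w, hw, hmw⟩ := Set.mem_mul.mp this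
    obtain ⟨j, hj⟩ := Subgroup.mem_zpowers_iff.mp hw
    exact ⟨m, hm, j, by rw [← hmw, hj]⟩
  have hMH : ∀ m : G, m ∈ M → m ∈ H := by
    intro m hm
    have : m ∈ (M : Set G) * (Subgroup.zpowers c : Set G) :=
      Set.mem_mul.mpr ⟨m, hm, 1, Subgroup.one_mem _, mul_one m⟩
    rw [← hH] at this; exact this
  have hcpowH : ∀ j : ℤ, c ^ j ∈ H := by
    intro j
    have : c ^ j ∈ (M : Set G) * (Subgroup.zpowers c : Set G) :=
      Set.mem_mul.mpr ⟨1, M.one_mem, c ^ j, ⟨j, rfl⟩, one_mul _⟩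
    rw [← hH] at this; exact this
  -- helper for nonneg zpow membership
  have hzmem : ∀ (g : G), g ∈ M → ∀ t : ℤ, 0 ≤ t → g ^ t ∈ M := by
    intro g hg t ht
    lift t to ℕ using ht
    rw [zpow_natCast]; exact pow_mem hg t
  -- exponent N
  set N := H.normalCore.index with hNdef
  have hN0 : N ≠ 0 := Subgroup.FiniteIndex.index_ne_zero
  have hN1 : 1 ≤ (N : ℤ) := by omega
  have hgpow : ∀ g : G, g ^ (N : ℤ) ∈ H := by
    intro g
    rw [zpow_natCast]
    exact H.normalCore_le (Subgroup.pow_index_mem H.normalCore g)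
  -- witnesses
  obtain ⟨m1, hm1, a1, he1⟩ := hmemH (hgpow x)
  obtain ⟨m2, hm2, a2, he2⟩ := hmemH (hgpow y)
  obtain ⟨m3, hm3, a3, he3⟩ := hmemH (hgpow x⁻¹)
  obtain ⟨m4, hm4, a4, he4⟩ := hmemH (hgpow y⁻¹)
  have hm1e : m1 = x ^ (N : ℤ) * c ^ (-a1) := by rw [he1]; group
  have hm2e : m2 = y ^ (N : ℤ) * c ^ (-a2) := by rw [he2]; group
  have hm3e : m3 = x ^ (-(N : ℤ)) * c ^ (-a3) := by
    have : x⁻¹ ^ (N : ℤ) = x ^ (-(N:ℤ)) := by group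
    rw [this] at he3; rw [he3]; group
  have hm4e : m4 = y ^ (-(N : ℤ)) * c ^ (-a4) := by
    have : y⁻¹ ^ (N : ℤ) = y ^ (-(N:ℤ)) := by group
    rw [this] at he4; rw [he4]; group
  -- power formula
  have hpw : ∀ (g : G) (e f : ℤ) (r : ℕ),
      (g ^ e * c ^ f) ^ r = g ^ (e * (r:ℤ)) * c ^ (f * (r:ℤ)) := by
    intro g e f r
    have hcom : Commute (g ^ e) (c ^ f) := (((hc g).zpow_left f).zpow_right e).symm
    rw [hcom.mul_pow, ← zpow_natCast (g ^ e) r, ← zpow_natCast (c ^ f) r,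
      ← zpow_mul, ← zpow_mul]
  -- shuffle
  have shuffle : ∀ (g1 g2 : G) (i j : ℤ),
      (g1 * c ^ i) * (g2 * c ^ j) = (g1 * g2) * c ^ (i + j) := by
    intro g1 g2 i j
    calc (g1 * c ^ i) * (g2 * c ^ j) = g1 * (c ^ i * g2) * c ^ j := by group
    _ = g1 * (g2 * c ^ i) * c ^ j := by rw [hcg i g2]
    _ = (g1 * g2) * c ^ (i + j) := by rw [zpow_add]; group
  -- product formula
  have hprod : ∀ (a b α β γ δ : ℤ),
      (x ^ a * c ^ α) * ((y ^ b * c ^ β) * ((x ^ (-a) * c ^ γ) * (y ^ (-b) * c ^ δ)))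
        = c ^ (a * b + (α + β + γ + δ)) := by
    intro a b α β γ δ
    calc (x ^ a * c ^ α) * ((y ^ b * c ^ β) * ((x ^ (-a) * c ^ γ) * (y ^ (-b) * c ^ δ)))
        = (x ^ a * c ^ α) * ((y ^ b * c ^ β) * ((x ^ (-a) * y ^ (-b)) * c ^ (γ + δ))) := by
          rw [shuffle]
    _ = (x ^ a * c ^ α) * ((y ^ b * (x ^ (-a) * y ^ (-b))) * c ^ (β + (γ + δ))) := by
          rw [shuffle]
    _ = (x ^ a * (y ^ b * (x ^ (-a) * y ^ (-b)))) * c ^ (α + (β + (γ + δ))) := by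
          rw [shuffle]
    _ = c ^ (a * b) * c ^ (α + (β + (γ + δ))) := by
          rw [show x ^ a * (y ^ b * (x ^ (-a) * y ^ (-b))) = x ^ a * y ^ b * x ^ (-a) * y ^ (-b) by
            group, k3 hc hconj a b]
    _ = c ^ (a * b + (α + β + γ + δ)) := by rw [← zpow_add]; congr 1; ring
  set P : ℤ := -a1 + -a3 with hPdef
  set Q : ℤ := -a2 + -a4 with hQdef
  -- the two families of members
  have hWpos : ∀ r k : ℕ, c ^ ((N:ℤ)*(N:ℤ)*(r:ℤ)*(k:ℤ) + P*(r:ℤ) + Q*(k:ℤ)) ∈ M := by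
    intro r k
    have hmem : m1 ^ r * (m2 ^ k * (m3 ^ r * m4 ^ k)) ∈ M :=
      mul_mem (pow_mem hm1 r) (mul_mem (pow_mem hm2 k) (mul_mem (pow_mem hm3 r) (pow_mem hm4 k)))
    have heq : m1 ^ r * (m2 ^ k * (m3 ^ r * m4 ^ k))
        = c ^ (((N:ℤ)*(r:ℤ)) * ((N:ℤ)*(k:ℤ)) + ((-a1*(r:ℤ)) + (-a2*(k:ℤ)) + (-a3*(r:ℤ)) + (-a4*(k:ℤ)))) := by
      rw [hm1e, hm2e, hm3e, hm4e, hpw, hpw, hpw, hpw,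
        show (-(N:ℤ)) * (r:ℤ) = -((N:ℤ)*(r:ℤ)) by ring,
        show (-(N:ℤ)) * (k:ℤ) = -((N:ℤ)*(k:ℤ)) by ring]
      exact hprod ((N:ℤ)*(r:ℤ)) ((N:ℤ)*(k:ℤ)) (-a1*(r:ℤ)) (-a2*(k:ℤ)) (-a3*(r:ℤ)) (-a4*(k:ℤ))
    rw [heq] at hmem
    rwa [show (((N:ℤ)*(r:ℤ)) * ((N:ℤ)*(k:ℤ)) + ((-a1*(r:ℤ)) + (-a2*(k:ℤ)) + (-a3*(r:ℤ)) + (-a4*(k:ℤ))))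
      = (N:ℤ)*(N:ℤ)*(r:ℤ)*(k:ℤ) + P*(r:ℤ) + Q*(k:ℤ) by rw [hPdef, hQdef]; ring] at hmem
  have hWneg : ∀ r k : ℕ, c ^ (-((N:ℤ)*(N:ℤ)*(r:ℤ)*(k:ℤ)) + P*(r:ℤ) + Q*(k:ℤ)) ∈ M := by
    intro r k
    have hmem : m1 ^ r * (m4 ^ k * (m3 ^ r * m2 ^ k)) ∈ M :=
      mul_mem (pow_mem hm1 r) (mul_mem (pow_mem hm4 k) (mul_mem (pow_mem hm3 r) (pow_mem hm2 k)))
    have heq : m1 ^ r * (m4 ^ k * (m3 ^ r * m2 ^ k))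
        = c ^ (((N:ℤ)*(r:ℤ)) * (-((N:ℤ)*(k:ℤ))) + ((-a1*(r:ℤ)) + (-a4*(k:ℤ)) + (-a3*(r:ℤ)) + (-a2*(k:ℤ)))) := by
      have h2 : m2 ^ k = y ^ (-(-((N:ℤ)*(k:ℤ)))) * c ^ (-a2*(k:ℤ)) := by
        rw [hm2e, hpw]; congr 1; congr 1; ring
      have h4 : m4 ^ k = y ^ (-((N:ℤ)*(k:ℤ))) * c ^ (-a4*(k:ℤ)) := by
        rw [hm4e, hpw]; congr 1; congr 1; ring
      rw [hm1e, hm3e, h2, h4, hpw, hpw,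
        show (-(N:ℤ)) * (r:ℤ) = -((N:ℤ)*(r:ℤ)) by ring]
      exact hprod ((N:ℤ)*(r:ℤ)) (-((N:ℤ)*(k:ℤ))) (-a1*(r:ℤ)) (-a4*(k:ℤ)) (-a3*(r:ℤ)) (-a2*(k:ℤ))
    rw [heq] at hmem
    rwa [show (((N:ℤ)*(r:ℤ)) * (-((N:ℤ)*(k:ℤ))) + ((-a1*(r:ℤ)) + (-a4*(k:ℤ)) + (-a3*(r:ℤ)) + (-a2*(k:ℤ))))
      = -((N:ℤ)*(N:ℤ)*(r:ℤ)*(k:ℤ)) + P*(r:ℤ) + Q*(k:ℤ) by rw [hPdef, hQdef]; ring] at hmem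
  -- pick positive and negative exponents
  have hPabs : -(P.natAbs : ℤ) ≤ P ∧ P ≤ (P.natAbs : ℤ) := by
    constructor
    · rw [← Int.abs_eq_natAbs]; exact neg_abs_le P
    · rw [← Int.abs_eq_natAbs]; exact le_abs_self P
  have hQabs : -(Q.natAbs : ℤ) ≤ Q ∧ Q ≤ (Q.natAbs : ℤ) := by
    constructor
    · rw [← Int.abs_eq_natAbs]; exact neg_abs_le Q
    · rw [← Int.abs_eq_natAbs]; exact le_abs_self Q
  set A : ℕ := P.natAbs
  set B : ℕ := Q.natAbs
  set r1 : ℕ := A + B + 1 with hr1def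
  set upos : ℤ := (N:ℤ)*(N:ℤ)*(r1:ℤ)*(r1:ℤ) + P*(r1:ℤ) + Q*(r1:ℤ) with huposdef
  have hupos : 0 < upos := by
    have hr1c : (r1:ℤ) = (A:ℤ) + (B:ℤ) + 1 := by push_cast [hr1def]; ring
    have h1 : 0 < (r1:ℤ) := by omega
    nlinarith [hPabs.1, hQabs.1, hN1, mul_le_mul_of_nonneg_right hPabs.1 (le_of_lt h1),
      mul_le_mul_of_nonneg_right hQabs.1 (le_of_lt h1),
      mul_le_mul_of_nonneg_right (mul_le_mul_of_nonneg_right hN1 (by omega : (0:ℤ) ≤ (N:ℤ))) (mul_pos h1 h1).le]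
  have hu : c ^ upos ∈ M := hWpos r1 r1
  set k0 : ℕ := A + 1 with hk0def
  set r0 : ℕ := k0 * (B + 1) with hr0def
  set uneg : ℤ := -((N:ℤ)*(N:ℤ)*(r0:ℤ)*(k0:ℤ)) + P*(r0:ℤ) + Q*(k0:ℤ) with hunegdef
  have huneg : uneg < 0 := by
    have hk0c : (k0:ℤ) = (A:ℤ) + 1 := by push_cast [hk0def]; ring
    have hr0c : (r0:ℤ) = (k0:ℤ) * ((B:ℤ) + 1) := by push_cast [hr0def]; ring
    have hk0pos : 0 < (k0:ℤ) := by omega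
    have hr0pos : 0 < (r0:ℤ) := by positivity
    have hA : (A:ℤ) = (k0:ℤ) - 1 := by omega
    have f1 : P * (r0:ℤ) ≤ (A:ℤ) * (r0:ℤ) := mul_le_mul_of_nonneg_right hPabs.2 hr0pos.le
    have f2 : Q * (k0:ℤ) ≤ (B:ℤ) * (k0:ℤ) := mul_le_mul_of_nonneg_right hQabs.2 hk0pos.le
    have hNN : (1:ℤ) ≤ (N:ℤ) * (N:ℤ) := by nlinarith
    have f3 : 1 * ((r0:ℤ) * (k0:ℤ)) ≤ (N:ℤ)*(N:ℤ) * ((r0:ℤ) * (k0:ℤ)) :=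
      mul_le_mul_of_nonneg_right hNN (mul_nonneg hr0pos.le hk0pos.le)
    have g1 : (A:ℤ) * (r0:ℤ) + (B:ℤ) * (k0:ℤ) - (r0:ℤ) * (k0:ℤ) = -(k0:ℤ) := by
      rw [hA, hr0c]; ring
    rw [hunegdef]
    linarith [f1, f2, f3, g1, hk0pos]
  have hw : c ^ uneg ∈ M := hWneg r0 k0
  -- define n
  set n : ℤ := upos * (-uneg) with hndef
  have hn : 0 < n := mul_pos hupos (by omega)
  have hc_n : c ^ n ∈ M := by
    rw [hndef, zpow_mul]
    exact hzmem _ hu (-uneg) (by omega)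
  have hc_negn : c ^ (-n) ∈ M := by
    rw [show -n = uneg * upos by rw [hndef]; ring, zpow_mul]
    exact hzmem _ hw upos hupos.le
  have hmuln : ∀ j : ℤ, c ^ (n * j) ∈ M := by
    intro j
    rcases le_or_gt 0 j with hj | hj
    · rw [zpow_mul]; exact hzmem _ hc_n j hj
    · rw [show n * j = (-n) * (-j) by ring, zpow_mul]
      exact hzmem _ hc_negn (-j) (by omega)
  -- M is a subgroup
  have hinv : ∀ m : G, m ∈ M → m⁻¹ ∈ M := by
    intro m hm
    obtain ⟨m', hm', j, hj⟩ := hmemH (H.inv_mem (hMH m hm))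
    have hm'eq : m' = m⁻¹ * c ^ (-j) := by rw [zpow_neg, hj]; group
    have hcnegj : c ^ (-j) ∈ M := by
      have : m * m' ∈ M := mul_mem hm hm'
      rwa [hm'eq, show m * (m⁻¹ * c ^ (-j)) = c ^ (-j) by group] at this
    have key : m⁻¹ = m' * (c ^ (-j)) ^ (n - 1) * c ^ (n * j) := by
      rw [hj, ← zpow_mul, mul_assoc, ← zpow_add]
      congr 1
      congr 1
      ring
    rw [key]
    exact mul_mem (mul_mem hm' (hzmem _ hcnegj (n - 1) (by omega))) (hmuln j)
  set K : Subgroup G :=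
    { carrier := (M : Set G)
      one_mem' := M.one_mem
      mul_mem' := fun ha hb => M.mul_mem ha hb
      inv_mem' := fun {g} hg => hinv g hg } with hKdef
  have hKcar : (K : Set G) = (M : Set G) := rfl
  refine ⟨K, rfl, ?_⟩
  -- finite index
  have hKle : K ≤ H := fun g hg => hMH g hg
  have hfinq : Finite (H ⧸ K.subgroupOf H) := by
    have hn0 : n ≠ 0 := by omega
    refine Finite.of_surjective
      (fun i : Fin n.toNat => (QuotientGroup.mk ⟨c ^ ((i : ℕ) : ℤ), hcpowH _⟩ : H ⧸ K.subgroupOf H)) ?_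
    intro q
    refine QuotientGroup.induction_on q ?_
    rintro ⟨h, hh⟩
    obtain ⟨m, hm, j, hj⟩ := hmemH hh
    have hs0 : 0 ≤ j % n := Int.emod_nonneg j hn0
    have hslt : j % n < n := Int.emod_lt_of_pos j hn
    refine ⟨⟨(j % n).toNat, by omega⟩, ?_⟩
    rw [QuotientGroup.eq, Subgroup.mem_subgroupOf]
    have hcast : (((j % n).toNat : ℕ) : ℤ) = j % n := Int.toNat_of_nonneg hs0
    show (c ^ (((j % n).toNat : ℕ) : ℤ))⁻¹ * h ∈ K
    rw [hcast, hj, ← zpow_neg]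
    have hval : c ^ (-(j % n)) * (m * c ^ j) = m * c ^ (n * (j / n)) := by
      calc c ^ (-(j % n)) * (m * c ^ j)
          = m * (c ^ (-(j % n)) * c ^ j) := by
            rw [← mul_assoc, hcg (-(j % n)) m, mul_assoc]
      _ = m * c ^ (n * (j / n)) := by
            rw [← zpow_add]
            congr 1
            rw [Int.emod_def]
            ring_nf
    rw [hval]
    exact mul_mem hm (hmuln _)
  have hrel : (K.subgroupOf H).index ≠ 0 := Subgroup.index_ne_zero_of_finite
  refine ⟨?_⟩
  rw [← Subgroup.relIndex_mul_index hKle]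
  exact mul_ne_zero hrel hfi.index_ne_zero

lemma sup_carrier_monoid {G : Type*} [Group G] (M : Submonoid G) (Z : Subgroup G)
    (hZ : ∀ ζ ∈ Z, ∀ g : G, ζ * g = g * ζ) :
    ((M ⊔ Z.toSubmonoid : Submonoid G) : Set G) = (M : Set G) * (Z : Set G) := by
  have hmulmem : ∀ a ∈ (M : Set G) * (Z : Set G), ∀ b ∈ (M : Set G) * (Z : Set G),
      a * b ∈ (M : Set G) * (Z : Set G) := by
    rintro a ⟨m, hm, ζ, hζ, rfl⟩ b ⟨m', hm', ζ', hζ', rfl⟩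
    refine Set.mem_mul.mpr ⟨m * m', mul_mem hm hm', ζ * ζ', mul_mem hζ hζ', ?_⟩
    calc m * m' * (ζ * ζ') = m * (m' * ζ) * ζ' := by group
    _ = m * (ζ * m') * ζ' := by rw [hZ ζ hζ m']
    _ = m * ζ * (m' * ζ') := by group
  let N : Submonoid G :=
    { carrier := (M : Set G) * (Z : Set G)
      one_mem' := ⟨1, M.one_mem, 1, Z.one_mem, one_mul 1⟩
      mul_mem' := fun {a b} ha hb => hmulmem a ha b hb }
  apply le_antisymm
  · have h1 : M ≤ N := fun m hm => ⟨m, hm, 1, Z.one_mem, mul_one m⟩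
    have h2 : Z.toSubmonoid ≤ N := fun ζ hζ => ⟨1, M.one_mem, ζ, hζ, one_mul ζ⟩
    exact fun g hg => (sup_le h1 h2) hg
  · rintro g ⟨m, hm, ζ, hζ, rfl⟩
    exact mul_mem (SetLike.le_def.mp le_sup_left hm)
      (SetLike.le_def.mp le_sup_right (show ζ ∈ Z.toSubmonoid from hζ))

lemma iter_lemma {G : Type*} [Group G] :
    ∀ (n : ℕ) (M : Submonoid G) (z : Fin n → G),
      (∀ i, z i ∈ Subgroup.center G) →
      (∀ i, ∃ x y : G, z i = x⁻¹ * y⁻¹ * x * y) →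
      (∃ H : Subgroup G, (H : Set G) = (M : Set G) * (Subgroup.closure (Set.range z) : Set G)
        ∧ H.FiniteIndex) →
      ∃ K : Subgroup G, (K : Set G) = (M : Set G) ∧ K.FiniteIndex := by
  intro n
  induction n with
  | zero =>
      rintro M z _ _ ⟨H, hH, hfi⟩
      refine ⟨H, ?_, hfi⟩
      rw [hH]
      have : Set.range z = (∅ : Set G) := Set.range_eq_empty z
      rw [this, Subgroup.closure_empty, Subgroup.coe_bot, Set.mul_singleton]
      simp
  | succ n ih =>
      rintro M z hzc hzcomm ⟨H, hH, hfi⟩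
      set z' : Fin n → G := fun i => z i.castSucc with hz'def
      set zl : G := z (Fin.last n) with hzldef
      set Z' : Subgroup G := Subgroup.closure (Set.range z') with hZ'def
      have hrange : Set.range z = Set.range z' ∪ {zl} := by
        ext g
        constructor
        · rintro ⟨i, rfl⟩
          induction i using Fin.lastCases with
          | last => right; rfl
          | cast i => left; exact ⟨i, rfl⟩
        · rintro (⟨i, rfl⟩ | hg)
          · exact ⟨i.castSucc, rfl⟩
          · exact ⟨Fin.last n, hg.symm ▸ rfl⟩
      have hZdecomp : Subgroup.closure (Set.range z) = Z' ⊔ Subgroup.zpowers zl := by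
        rw [hrange, Subgroup.closure_union, ← Subgroup.zpowers_eq_closure]
      have hlcent : zl ∈ Subgroup.center G := hzc (Fin.last n)
      haveI hnormal : (Subgroup.zpowers zl).Normal := by
        constructor
        intro b hb g
        obtain ⟨k, hk⟩ := Subgroup.mem_zpowers_iff.mp hb
        have hbc : g * b = b * g := by
          rw [← hk]
          exact (Commute.zpow_left
            (show Commute zl g from (Subgroup.mem_center_iff.mp hlcent g).symm) k).eq.symm
        have : g * b * g⁻¹ = b := by rw [hbc]; group
        rw [this]; exact hb
      have hsetZ : (Subgroup.closure (Set.range z) : Set G)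
          = (Z' : Set G) * (Subgroup.zpowers zl : Set G) := by
        rw [hZdecomp, Subgroup.mul_normal]
      have hZ'cent : ∀ ζ ∈ Z', ∀ g : G, ζ * g = g * ζ := by
        intro ζ hζ g
        have : Z' ≤ Subgroup.center G := by
          rw [hZ'def]
          apply (Subgroup.closure_le _).mpr
          rintro w ⟨i, rfl⟩
          exact hzc i.castSucc
        exact ((Subgroup.mem_center_iff.mp (this hζ)) g).symm
      set M' : Submonoid G := M ⊔ Z'.toSubmonoid with hM'def
      have hM'car : (M' : Set G) = (M : Set G) * (Z' : Set G) := sup_carrier_monoid M Z' hZ'cent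
      obtain ⟨xl, yl, hxy⟩ := hzcomm (Fin.last n)
      have hcentral : ∀ g : G, Commute (xl⁻¹ * yl⁻¹ * xl * yl) g := by
        intro g
        have : zl = xl⁻¹ * yl⁻¹ * xl * yl := hxy
        rw [← this]
        exact ((Subgroup.mem_center_iff.mp hlcent g)).symm
      have hHset : (H : Set G) = (M' : Set G) * (Subgroup.zpowers (xl⁻¹ * yl⁻¹ * xl * yl) : Set G) := by
        rw [hH, hsetZ, ← mul_assoc, ← hM'car, ← hxy]
      obtain ⟨K', hK'car, hK'fi⟩ := step_lemma M' xl yl hcentral H hHset hfi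
      exact ih M z' (fun i => hzc i.castSucc) (fun i => hzcomm i.castSucc)
        ⟨K', by rw [hK'car, hM'car], hK'fi⟩


theorem stmt_19 {G : Type*} [Group G] [Group.FG G] [Group.IsNilpotent G]
    (M : Submonoid G) (Z : Subgroup G) (hZcent : Z ≤ Subgroup.center G)
    {n : ℕ} (z : Fin n → G)
    (hcomm : ∀ i, ∃ x y : G, z i = x⁻¹ * y⁻¹ * x * y)
    (hgen : Subgroup.closure (Set.range z) = Z)
    (h : ∃ H : Subgroup G, (H : Set G) = (M : Set G) * (Z : Set G) ∧ H.FiniteIndex) :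
    ∃ K : Subgroup G, (K : Set G) = (M : Set G) ∧ K.FiniteIndex := by
  refine iter_lemma n M z
    (fun i => hZcent (hgen ▸ Subgroup.subset_closure (Set.mem_range_self i))) hcomm ?_
  obtain ⟨H, hH, hfi⟩ := h
  exact ⟨H, by rw [hgen]; exact hH, hfi⟩
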